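/- For any subset X of ℚ and any subset F ⊆ X such that F is infinite and F has no isolated points in X, there exists a function f : X → X with f(f(x)) = x for all x ∈ X whose set of discontinuity points (in the subspace topology from ℝ) is exactly F. -/

import Mathlib

open Filter Metric Set Topology

namespace Stmt1Aux

attribute [local instance] Classical.propDecidable

noncomputable section

variable (F : Set ℝ) (e : ℕ → ℝ)

def D : Set ℝ := {z | AccPt z (𝓟 F)}

def dd (v : ℝ) : ℝ := infDist v (D F)

def SAFE (n : ℕ) (y w : ℝ) : Prop :=
  min 1 ((dist y w - (2:ℝ)^(-(n:ℤ)))/4) ≤ min (dd F y) (dd F w)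

def spec (n : ℕ) (s : ℕ → Option ℕ) (w : ℕ) : Prop :=
  w ≠ n ∧ s w = none ∧
    (SAFE F n (e n) (e w) ∨
      ((∀ v, v ≠ n → s v = none → ¬ SAFE F n (e n) (e v)) ∧
        ∃ z ∈ D F, dist (e n) z ≤ dd F (e n) + 2^(-(n:ℤ)) ∧ dist (e w) z < 2^(-(n:ℤ))))

def step (n : ℕ) (s : ℕ → Option ℕ) : ℕ → Option ℕ :=
  if h : s n = none ∧ ∃ w, spec F e n s w then
    fun i => if i = n then some h.2.choose else if i = h.2.choose then some n else s i
  else s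

def st : ℕ → ℕ → Option ℕ
  | 0 => fun _ => none
  | n+1 => step F e n (st n)

lemma st_succ (n : ℕ) : st F e (n+1) = step F e n (st F e n) := rfl

lemma st_mono {n i j : ℕ} (h : st F e n i = some j) : st F e (n+1) i = some j := by
  rw [st_succ]
  unfold step
  split
  · next hc =>
    have hin : i ≠ n := by rintro rfl; rw [hc.1] at h; exact nomatch h
    have hiw : i ≠ hc.2.choose := by
      rintro rfl; rw [hc.2.choose_spec.2.1] at h; exact nomatch h
    simp [hin, hiw, h]
  · exact h

lemma st_le_mono {m n i j : ℕ} (hmn : m ≤ n) (h : st F e m i = some j) :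
    st F e n i = some j := by
  induction n with
  | zero => exact (Nat.le_zero.mp hmn) ▸ h
  | succ n ih =>
    rcases Nat.lt_or_ge m (n+1) with h1 | h1
    · exact st_mono F e (ih (Nat.lt_succ_iff.mp h1))
    · exact (Nat.le_antisymm hmn h1) ▸ h

lemma st_symm : ∀ n i j, st F e n i = some j → st F e n j = some i := by
  intro n
  induction n with
  | zero => intro i j h; exact nomatch h
  | succ n ih =>
    intro i j h
    rw [st_succ] at h ⊢
    unfold step at h ⊢
    by_cases hc : st F e n n = none ∧ ∃ w, spec F e n (st F e n) w
    · rw [dif_pos hc] at h ⊢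
      have hw := hc.2.choose_spec
      by_cases hi : i = n
      · simp only [if_pos hi] at h
        have hj : hc.2.choose = j := by injection h
        have hjn : j ≠ n := hj ▸ hw.1
        simp only [if_neg hjn, if_pos hj.symm]
        exact congrArg some hi.symm
      · by_cases hiw : i = hc.2.choose
        · simp only [if_neg hi, if_pos hiw] at h
          have hj : n = j := by injection h
          simp only [if_pos hj.symm]
          exact congrArg some hiw.symm
        · simp only [if_neg hi, if_neg hiw] at h
          have h2 := ih i j h
          have hjn : j ≠ n := by rintro rfl; rw [hc.1] at h2; exact nomatch h2
          have hjw : j ≠ hc.2.choose := by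
            rintro rfl; rw [hw.2.1] at h2; exact nomatch h2
          simp only [if_neg hjn, if_neg hjw]
          exact h2
    · rw [dif_neg hc] at h ⊢
      exact ih i j h

lemma st_ne_self : ∀ n i, st F e n i ≠ some i := by
  intro n
  induction n with
  | zero => intro i h; exact nomatch h
  | succ n ih =>
    intro i h
    rw [st_succ] at h
    unfold step at h
    by_cases hc : st F e n n = none ∧ ∃ w, spec F e n (st F e n) w
    · rw [dif_pos hc] at h
      have hw := hc.2.choose_spec
      by_cases hi : i = n
      · simp only [if_pos hi] at h
        have hwi : hc.2.choose = i := by injection h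
        exact hw.1 (hwi.trans hi)
      · by_cases hiw : i = hc.2.choose
        · simp only [if_neg hi, if_pos hiw] at h
          have hni : n = i := by injection h
          exact hi hni.symm
        · simp only [if_neg hi, if_neg hiw] at h
          exact ih i h
    · rw [dif_neg hc] at h
      exact ih i h

lemma st_finite (n : ℕ) : {i | st F e n i ≠ none}.Finite := by
  induction n with
  | zero => simp [st]
  | succ n ih =>
    have : {i | st F e (n+1) i ≠ none} ⊆
        insert n (insert (if hc : st F e n n = none ∧ ∃ w, spec F e n (st F e n) w
          then hc.2.choose else 0) {i | st F e n i ≠ none}) := by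
      intro i hi
      rw [mem_setOf_eq, st_succ] at hi
      unfold step at hi
      by_cases hc : st F e n n = none ∧ ∃ w, spec F e n (st F e n) w
      · rw [dif_pos hc] at hi
        by_cases hi1 : i = n
        · exact Or.inl hi1
        · by_cases hi2 : i = hc.2.choose
          · refine Or.inr (Or.inl ?_); rw [dif_pos hc]; exact hi2
          · simp only [if_neg hi1, if_neg hi2] at hi
            exact Or.inr (Or.inr hi)
      · rw [dif_neg hc] at hi
        exact Or.inr (Or.inr hi)
    exact (Set.Finite.insert n (Set.Finite.insert _ ih)).subset this

lemma exists_near {z : ℝ} (hz : z ∈ D F) {r : ℝ} (hr : 0 < r) {M : Set ℝ}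
    (hM : M.Finite) : ∃ v ∈ F, dist v z < r ∧ v ∉ M ∧ v ≠ z := by
  by_contra h
  push_neg at h
  have hOpen : IsOpen (ball z r \ (M \ {z})) :=
    isOpen_ball.sdiff ((hM.subset diff_subset).isClosed)
  have hzU : z ∈ ball z r \ (M \ {z}) := ⟨mem_ball_self hr, by simp⟩
  have hz' := (accPt_iff_nhds (x := z) (C := F)).mp hz
  obtain ⟨y, ⟨hyU, hyF⟩, hyz⟩ := hz' _ (hOpen.mem_nhds hzU)
  exact hyz (h y hyF (mem_ball.mp hyU.1) (fun hm => hyU.2 ⟨hm, hyz⟩))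

lemma st_exists (hF : range e = F) (hD : (D F).Nonempty) (n : ℕ)
    (hn : st F e n n = none) : ∃ w, spec F e n (st F e n) w := by
  by_cases hS : ∃ w, w ≠ n ∧ st F e n w = none ∧ SAFE F n (e n) (e w)
  · obtain ⟨w, h1, h2, h3⟩ := hS
    exact ⟨w, h1, h2, Or.inl h3⟩
  · push_neg at hS
    have hpos : (0:ℝ) < 2^(-(n:ℤ)) := zpow_pos (by norm_num) _
    have hlt : dd F (e n) < dd F (e n) + 2^(-(n:ℤ)) := by linarith
    obtain ⟨z, hzD, hzd⟩ := (infDist_lt_iff hD).mp hlt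
    have hMfin : ((e '' {i | st F e n i ≠ none}) ∪ {e n}).Finite :=
      ((st_finite F e n).image e).union (finite_singleton _)
    obtain ⟨v, hvF, hvz, hvM, hvne⟩ := exists_near F hzD hpos hMfin
    rw [← hF] at hvF
    obtain ⟨w, rfl⟩ := hvF
    have hwn : w ≠ n := by
      rintro rfl; exact hvM (Or.inr rfl)
    have hwnone : st F e n w = none := by
      by_contra hh
      exact hvM (Or.inl ⟨w, hh, rfl⟩)
    refine ⟨w, hwn, hwnone, Or.inr ⟨fun v hv1 hv2 => hS v hv1 hv2, z, hzD, ?_, hvz⟩⟩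
    exact le_of_lt hzd

lemma st_progress (hF : range e = F) (hD : (D F).Nonempty) (n : ℕ) :
    ∃ w, st F e (n+1) n = some w := by
  rcases hh : st F e n n with _ | w
  · have hc : st F e n n = none ∧ ∃ w, spec F e n (st F e n) w :=
      ⟨hh, st_exists F e hF hD n hh⟩
    refine ⟨hc.2.choose, ?_⟩
    rw [st_succ]
    unfold step
    rw [dif_pos hc]
    simp
  · exact ⟨w, st_mono F e hh⟩

variable (hF : range e = F) (hD : (D F).Nonempty)
include hF hD

def prt (n : ℕ) : ℕ := (st F e (n+1) n).getD 0

lemma st_prt (n : ℕ) : st F e (n+1) n = some (prt F e n) := by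
  obtain ⟨w, hw⟩ := st_progress F e hF hD n
  rw [hw]; rw [prt, hw]; rfl

lemma prt_ne (n : ℕ) : prt F e n ≠ n := by
  intro h
  have h2 := st_prt F e hF hD n
  rw [h] at h2
  exact st_ne_self F e (n+1) n h2

lemma prt_invol (n : ℕ) : prt F e (prt F e n) = n := by
  set j := prt F e n with hj
  have h1 : st F e (max (n+1) (j+1)) n = some j :=
    st_le_mono F e (le_max_left _ _) (st_prt F e hF hD n)
  have h2 : st F e (max (n+1) (j+1)) j = some (prt F e j) :=
    st_le_mono F e (le_max_right _ _) (st_prt F e hF hD j)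
  have h3 := st_symm F e _ _ _ h1
  rw [h2] at h3
  injection h3

lemma pair_origin : ∀ n i j, st F e n i = some j →
    (i < j ∧ st F e i i = none ∧ st F e (i+1) i = some j) ∨
    (j < i ∧ st F e j j = none ∧ st F e (j+1) j = some i) := by
  intro n
  induction n with
  | zero => intro i j h; exact nomatch h
  | succ n ih =>
    intro i j h
    rw [st_succ] at h
    unfold step at h
    by_cases hc : st F e n n = none ∧ ∃ w, spec F e n (st F e n) w
    · rw [dif_pos hc] at h
      have hw := hc.2.choose_spec
      have hwgt : n < hc.2.choose := by
        rcases Nat.lt_or_ge n hc.2.choose with h1 | h1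
        · exact h1
        · exfalso
          have h1' : hc.2.choose < n := lt_of_le_of_ne h1 hw.1
          obtain ⟨x, hx⟩ := st_progress F e hF hD hc.2.choose
          have := st_le_mono F e (Nat.succ_le_of_lt h1') hx
          rw [hw.2.1] at this
          exact nomatch this
      by_cases hi : i = n
      · simp only [if_pos hi] at h
        have hj : hc.2.choose = j := by injection h
        left
        subst hi
        refine ⟨hj ▸ hwgt, hc.1, ?_⟩
        rw [st_succ]; unfold step; rw [dif_pos hc]
        simp [hj]
      · by_cases hiw : i = hc.2.choose
        · simp only [if_neg hi, if_pos hiw] at h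
          have hj : n = j := by injection h
          right
          subst hj
          refine ⟨hiw ▸ hwgt, hc.1, ?_⟩
          rw [st_succ]; unfold step; rw [dif_pos hc]
          simp only [if_pos rfl]
          exact congrArg some hiw.symm
        · simp only [if_neg hi, if_neg hiw] at h
          exact ih i j h
    · rw [dif_neg hc] at h
      exact ih i j h

omit hF hD

lemma pair_spec {i j : ℕ} (h1 : st F e (i+1) i = some j) (h2 : st F e i i = none) :
    spec F e i (st F e i) j := by
  rw [st_succ] at h1
  unfold step at h1
  by_cases hc : st F e i i = none ∧ ∃ w, spec F e i (st F e i) w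
  · rw [dif_pos hc] at h1
    simp only [if_pos rfl] at h1
    have : hc.2.choose = j := by injection h1
    exact this ▸ hc.2.choose_spec
  · rw [dif_neg hc] at h1
    rw [h2] at h1
    exact nomatch h1

omit hF hD

lemma acc_infinite {p : ℝ} {S : Set ℝ} (h : AccPt p (𝓟 S)) {U : Set ℝ}
    (hU : U ∈ 𝓝 p) : (S ∩ U).Infinite := by
  intro hfin
  set K := (S ∩ U) \ {p} with hK
  have hKfin : K.Finite := hfin.subset diff_subset
  have hV : U ∩ Kᶜ ∈ 𝓝 p := by
    refine Filter.inter_mem hU ?_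
    exact hKfin.isClosed.isOpen_compl.mem_nhds (by simp [hK])
  obtain ⟨y, ⟨⟨hyU, hyK⟩, hyS⟩, hyp⟩ := (accPt_iff_nhds (x := p) (C := S)).mp h _ hV
  exact hyK ⟨⟨hyS, hyU⟩, hyp⟩

lemma no_acc_finite {S : Set ℝ} (h : S.Finite) (p : ℝ) : ¬ AccPt p (𝓟 S) := by
  intro hacc
  exact (acc_infinite hacc univ_mem) (h.subset inter_subset_left)

lemma no_acc_far {t : ℝ} (ht : 0 < t) (p : ℝ) :
    ¬ AccPt p (𝓟 {v | v ∈ F ∧ t ≤ dd F v}) := by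
  intro hacc
  have hpF : AccPt p (𝓟 F) :=
    hacc.mono (principal_mono.mpr (fun v hv => hv.1))
  have hd0 : dd F p = 0 := infDist_zero_of_mem hpF
  obtain ⟨y, ⟨hyb, hyS⟩, hyp⟩ :=
    (accPt_iff_nhds (x := p) (C := _)).mp hacc _ (ball_mem_nhds p (half_pos ht))
  have hlip : dd F y ≤ dd F p + dist y p := by
    have h1 := (lipschitz_infDist_pt (D F)).dist_le_mul y p
    simp only [NNReal.coe_one, one_mul] at h1
    rw [Real.dist_eq] at h1
    have h2 : infDist y (D F) - infDist p (D F) ≤ dist y p :=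
      (le_abs_self _).trans h1
    show infDist y (D F) ≤ infDist p (D F) + dist y p
    linarith
  rw [hd0] at hlip
  have hby : dist y p < t/2 := mem_ball.mp hyb
  have hyS2 : t ≤ dd F y := hyS.2
  linarith

lemma exists_acc_of_infinite_bounded {S : Set ℝ} (hS : S.Infinite) (p R : ℝ)
    (hb : ∀ x ∈ S, dist x p ≤ R) : ∃ q, AccPt q (𝓟 S) := by
  have hbd : Bornology.IsBounded S :=
    (isBounded_closedBall (x := p) (r := R)).subset
      (fun x hx => mem_closedBall.mpr (hb x hx))
  set u : ℕ → ℝ := fun n => ((hS.natEmbedding) n).1 with hu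
  have huinj : Function.Injective u := by
    intro a b hab
    exact (hS.natEmbedding).injective (Subtype.ext hab)
  have huS : ∀ n, u n ∈ S := fun n => ((hS.natEmbedding) n).2
  obtain ⟨a, _, φ, hφ, hconv⟩ := tendsto_subseq_of_bounded hbd huS
  refine ⟨a, (accPt_iff_nhds (x := a) (C := S)).mpr ?_⟩
  intro U hU
  have hev : ∀ᶠ k in atTop, (u ∘ φ) k ∈ U := hconv hU
  obtain ⟨N, hN⟩ := eventually_atTop.mp hev
  by_cases hNa : u (φ N) = a
  · refine ⟨u (φ (N+1)), ⟨hN _ (Nat.le_succ N), huS _⟩, ?_⟩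
    intro hh
    rw [← hNa] at hh
    have h5 := hφ.injective (huinj hh.symm)
    omega
  · exact ⟨u (φ N), ⟨hN N le_rfl, huS _⟩, hNa⟩

lemma accPt_union (p : ℝ) (A B : Set ℝ) :
    AccPt p (𝓟 (A ∪ B)) ↔ AccPt p (𝓟 A) ∨ AccPt p (𝓟 B) := by
  unfold AccPt
  rw [← sup_principal, inf_sup_left, sup_neBot]

variable (π : ℕ → ℕ)

def sigOf : ℝ → ℝ := fun x => if h : x ∈ range e then e (π h.choose) else x

lemma sigOf_eq (hinj : Function.Injective e) (i : ℕ) :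
    sigOf e π (e i) = e (π i) := by
  have h : (e i) ∈ range e := mem_range_self i
  simp only [sigOf, dif_pos h]
  exact congrArg e (congrArg π (hinj h.choose_spec))

lemma sigOf_mem (hinj : Function.Injective e) {y : ℝ} (hy : y ∈ range e) :
    sigOf e π y ∈ range e := by
  obtain ⟨i, rfl⟩ := hy
  rw [sigOf_eq e π hinj]
  exact mem_range_self _

lemma sigOf_invol (hinj : Function.Injective e) (hπ : ∀ i, π (π i) = i) {y : ℝ}
    (hy : y ∈ range e) : sigOf e π (sigOf e π y) = y := by
  obtain ⟨i, rfl⟩ := hy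
  rw [sigOf_eq e π hinj, sigOf_eq e π hinj, hπ]

lemma sigOf_ne (hinj : Function.Injective e) (hπ : ∀ i, π i ≠ i) {y : ℝ}
    (hy : y ∈ range e) : sigOf e π y ≠ y := by
  obtain ⟨i, rfl⟩ := hy
  rw [sigOf_eq e π hinj]
  exact fun h => hπ i (hinj h)

lemma no_acc_S (hF : range e = F) (hD : (D F).Nonempty)
    (hinj : Function.Injective e) (ε : ℝ) (hε : 0 < ε) (p : ℝ) :
    ¬ AccPt p (𝓟 {y | y ∈ F ∧ ε ≤ dist (sigOf e (prt F e) y) y}) := by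
  intro hacc
  obtain ⟨N, hN⟩ : ∃ N : ℕ, (2:ℝ)^(-(N:ℤ)) ≤ ε/4 := by
    obtain ⟨n, hn⟩ := exists_pow_lt_of_lt_one (show (0:ℝ) < ε/4 by linarith)
      (show (1:ℝ)/2 < 1 by norm_num)
    refine ⟨n, ?_⟩
    rw [zpow_neg, zpow_natCast, ← inv_pow, ← one_div]
    exact le_of_lt hn
  have hpow : ∀ i, N ≤ i → (2:ℝ)^(-(i:ℤ)) ≤ ε/4 := by
    intro i hi
    refine le_trans ?_ hN
    rw [zpow_neg, zpow_natCast, ← inv_pow, zpow_neg, zpow_natCast, ← inv_pow]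
    exact pow_le_pow_of_le_one (by norm_num) (by norm_num) hi
  have hpow1 : ∀ i : ℕ, (2:ℝ)^(-(i:ℤ)) ≤ 1 := by
    intro i
    rw [zpow_neg, zpow_natCast, ← inv_pow]
    exact pow_le_one₀ (by norm_num) (by norm_num)
  set c := min 1 (ε/8) with hcdef
  have hcpos : 0 < c := lt_min one_pos (by linarith)
  have memF : ∀ i : ℕ, e i ∈ F := by
    intro i; rw [← hF]; exact mem_range_self i
  set A := (e '' (Iio N)) ∪ ((fun i => e (prt F e i)) '' (Iio N)) with hA
  set B := {v | v ∈ F ∧ c ≤ dd F v} with hB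
  set W : ℕ → ℕ → ℝ → Prop := fun i j y =>
    N ≤ i ∧ st F e i i = none ∧ st F e (i+1) i = some j ∧ ε ≤ dist (e i) (e j) ∧
      ¬ SAFE F i (e i) (e j) ∧ y = e j with hWdef
  set C := {y | ∃ i j, W i j y} with hC
  have theft : ∀ i j, st F e i i = none → st F e (i+1) i = some j →
      ¬ SAFE F i (e i) (e j) →
      (∀ v, v ≠ i → st F e i v = none → ¬ SAFE F i (e i) (e v)) ∧
      ∃ z ∈ D F, dist (e i) z ≤ dd F (e i) + 2^(-(i:ℤ)) ∧ dist (e j) z < 2^(-(i:ℤ)) := by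
    intro i j h2 h1 hn
    have hs := pair_spec F e h1 h2
    rcases hs.2.2 with h | h
    · exact absurd h hn
    · exact h
  have thief_far : ∀ i j, N ≤ i → st F e i i = none → st F e (i+1) i = some j →
      ε ≤ dist (e i) (e j) → ¬ SAFE F i (e i) (e j) → ε/2 ≤ dd F (e i) := by
    intro i j hNi h2 h1 hd hn
    obtain ⟨-, z, hzD, hz1, hz2⟩ := theft i j h2 h1 hn
    have htri : dist (e i) (e j) ≤ dist (e i) z + dist (e j) z := dist_triangle_right _ _ _
    have h4 := hpow i hNi
    linarith [hz2.le, hz1]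
  have main : ∀ i j, N ≤ i → st F e i i = none → st F e (i+1) i = some j →
      ε ≤ dist (e i) (e j) → (e i ∈ B) ∧ (e j ∈ B ∪ C) := by
    intro i j hiN h0 h1 hd
    by_cases hSAFE : SAFE F i (e i) (e j)
    · have hcle : c ≤ min (dd F (e i)) (dd F (e j)) := by
        refine le_trans ?_ hSAFE
        have h2i := hpow i hiN
        have h8 : ε/8 ≤ (dist (e i) (e j) - 2^(-(i:ℤ)))/4 := by linarith
        exact min_le_min le_rfl h8
      exact ⟨⟨memF i, le_trans hcle (min_le_left _ _)⟩,
        Or.inl ⟨memF j, le_trans hcle (min_le_right _ _)⟩⟩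
    · have hfar := thief_far i j hiN h0 h1 hd hSAFE
      refine ⟨⟨memF i, le_trans ?_ hfar⟩, Or.inr ⟨i, j, hiN, h0, h1, hd, hSAFE, rfl⟩⟩
      exact le_trans (min_le_right 1 (ε/8)) (by linarith)
  have cover : {y | y ∈ F ∧ ε ≤ dist (sigOf e (prt F e) y) y} ⊆ A ∪ (B ∪ C) := by
    rintro y ⟨hyF, hyd⟩
    have hyr : y ∈ range e := by rw [hF]; exact hyF
    obtain ⟨k, rfl⟩ := hyr
    rw [sigOf_eq e (prt F e) hinj] at hyd
    have hk := st_prt F e hF hD k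
    rcases pair_origin F e hF hD _ _ _ hk with ⟨hlt, h0, h1⟩ | ⟨hlt, h0, h1⟩
    · by_cases hiN : k < N
      · exact Or.inl (Or.inl ⟨k, hiN, rfl⟩)
      · push_neg at hiN
        exact Or.inr ((main k (prt F e k) hiN h0 h1 (by rwa [dist_comm])).1 |> Or.inl)
    · by_cases hiN : prt F e k < N
      · refine Or.inl (Or.inr ⟨prt F e k, hiN, ?_⟩)
        show e (prt F e (prt F e k)) = e k
        rw [prt_invol F e hF hD]
      · push_neg at hiN
        exact Or.inr (main (prt F e k) k hiN h0 h1 hyd).2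
  have hsplit := hacc.mono (principal_mono.mpr cover)
  rw [accPt_union] at hsplit
  rcases hsplit with hA' | hBC
  · exact no_acc_finite (((finite_Iio N).image e).union ((finite_Iio N).image _)) p hA'
  · rw [accPt_union] at hBC
    rcases hBC with hB' | hC'
    · exact no_acc_far F hcpos p hB'
    · -- the C case
      have hCsub : C ⊆ {y | ∃ i j, W i j y ∧ dd F (e i) < 1} ∪
          {y | ∃ i j, W i j y ∧ 1 ≤ dd F (e i)} := by
        rintro y ⟨i, j, hw⟩
        rcases lt_or_ge (dd F (e i)) 1 with h | h
        exacts [Or.inl ⟨i, j, hw, h⟩, Or.inr ⟨i, j, hw, h⟩]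
      have hsplit2 := hC'.mono (principal_mono.mpr hCsub)
      rw [accPt_union] at hsplit2
      have key2 : ∀ a₁ b₁ a₂, a₁ < a₂ → st F e a₁ a₁ = none →
          st F e (a₁+1) a₁ = some b₁ → ¬SAFE F a₁ (e a₁) (e b₁) →
          st F e a₂ a₂ = none → 1 ≤ dd F (e a₁) → 1 ≤ dd F (e a₂) → False := by
        intro a₁ b₁ a₂ hlt h01 h11 hns1 h02 hb1 hb2
        obtain ⟨hnos, -⟩ := theft a₁ b₁ h01 h11 hns1
        have hun : st F e a₁ a₂ = none := by
          rcases hst : st F e a₁ a₂ with _ | x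
          · rfl
          · exfalso
            have h3 := st_le_mono F e (le_of_lt hlt) hst
            rw [h02] at h3
            exact nomatch h3
        refine hnos a₂ (by omega) hun ?_
        unfold SAFE
        exact le_trans (min_le_left _ _) (le_min hb1 hb2)
      rcases hsplit2 with hsmall | hbig
      · -- small thieves
        have hinf1 : ({y | ∃ i j, W i j y ∧ dd F (e i) < 1} ∩ ball p 1).Infinite :=
          acc_infinite hsmall (ball_mem_nhds p one_pos)
        set g : ℝ → ℝ := fun y =>
          if h : ∃ i j, W i j y ∧ dd F (e i) < 1 then e h.choose else y with hg
        have hgval : ∀ (y : ℝ) (h : ∃ i j, W i j y ∧ dd F (e i) < 1),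
            g y = e h.choose := by
          intro y h
          show (if h' : ∃ i j, W i j y ∧ dd F (e i) < 1 then e h'.choose else y) = _
          rw [dif_pos h]
        set T := {v | v ∈ F ∧ ε/2 ≤ dd F v} ∩ closedBall p 4 with hT
        have hginj : InjOn g ({y | ∃ i j, W i j y ∧ dd F (e i) < 1} ∩ ball p 1) := by
          rintro y₁ ⟨hy₁, -⟩ y₂ ⟨hy₂, -⟩ hgy
          rw [hgval y₁ hy₁, hgval y₂ hy₂] at hgy
          have hii := hinj hgy
          obtain ⟨j₁, hw₁, -⟩ := hy₁.choose_spec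
          obtain ⟨j₂, hw₂, -⟩ := hy₂.choose_spec
          have e₁ := hw₁.2.2.1
          have e₂ := hw₂.2.2.1
          rw [hii] at e₁
          rw [e₂] at e₁
          have : j₂ = j₁ := by injection e₁
          rw [hw₁.2.2.2.2.2, hw₂.2.2.2.2.2, this]
        have hgT : ∀ y ∈ ({y | ∃ i j, W i j y ∧ dd F (e i) < 1} ∩ ball p 1), g y ∈ T := by
          rintro y ⟨hy, hyb⟩
          rw [hgval y hy]
          obtain ⟨j, ⟨hNi, h0, h1, hd, hns, hyj⟩, hlt1⟩ := hy.choose_spec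
          set i := hy.choose
          obtain ⟨-, z, hzD, hz1, hz2⟩ := theft i j h0 h1 hns
          refine ⟨⟨memF i, thief_far i j hNi h0 h1 hd hns⟩, ?_⟩
          rw [mem_closedBall]
          have t1 : dist (e i) p ≤ dist (e i) z + dist (e j) z + dist (e j) p := by
            have := dist_triangle (e i) z (e j)
            have := dist_triangle (e i) (e j) p
            have := dist_triangle_right z (e j)
            linarith [dist_triangle (e i) (e j) p, dist_triangle_right (e i) (e j) z]
          have hp1 : dist (e j) p < 1 := by rw [← hyj]; exact mem_ball.mp hyb
          have h2i := hpow1 i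
          linarith [hz1, hz2.le]
        have hTinf : T.Infinite := by
          have himg := hinf1.image hginj
          refine himg.mono ?_
          rintro v ⟨y, hy, rfl⟩
          exact hgT y hy
        obtain ⟨q, hq⟩ := exists_acc_of_infinite_bounded hTinf p 4
          (fun x hx => mem_closedBall.mp hx.2)
        exact no_acc_far F (show (0:ℝ) < ε/2 by linarith) q
          (hq.mono (principal_mono.mpr inter_subset_left))
      · -- big thieves : subsingleton
        refine no_acc_finite ?_ p hbig
        refine Set.Subsingleton.finite ?_
        rintro y₁ ⟨i₁, j₁, ⟨hN1, h01, h11, hd1, hns1, rfl⟩, hb1⟩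
          y₂ ⟨i₂, j₂, ⟨hN2, h02, h12, hd2, hns2, rfl⟩, hb2⟩
        rcases lt_trichotomy i₁ i₂ with h | h | h
        · exact (key2 i₁ j₁ i₂ h h01 h11 hns1 h02 hb1 hb2).elim
        · subst h
          rw [h11] at h12
          have : j₁ = j₂ := by injection h12
          rw [this]
        · exact (key2 i₂ j₂ i₁ h h02 h12 hns2 h01 hb2 hb1).elim

lemma key_of (hF : range e = F) (hD : (D F).Nonempty)
    (hinj : Function.Injective e) (z : ℝ) (ε : ℝ) (hε : 0 < ε) :
    ∃ δ, 0 < δ ∧ ∀ y ∈ F, y ≠ z → dist y z < δ →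
      dist (sigOf e (prt F e) y) y < ε := by
  have h := no_acc_S F e hF hD hinj ε hε z
  rw [accPt_iff_nhds] at h
  push_neg at h
  obtain ⟨U, hU, hUprop⟩ := h
  obtain ⟨δ, hδ, hball⟩ := Metric.mem_nhds_iff.mp hU
  refine ⟨δ, hδ, ?_⟩
  intro y hyF hyz hyd
  by_contra hge
  push_neg at hge
  exact hyz (hUprop y ⟨hball (mem_ball.mpr hyd), hyF, hge⟩)

lemma key_trivial (σ : ℝ → ℝ) {z : ℝ} (hz : ¬ AccPt z (𝓟 F)) (ε : ℝ) :
    ∃ δ, 0 < δ ∧ ∀ y ∈ F, y ≠ z → dist y z < δ → dist (σ y) y < ε := by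
  rw [accPt_iff_nhds] at hz
  push_neg at hz
  obtain ⟨U, hU, hUprop⟩ := hz
  obtain ⟨δ, hδ, hball⟩ := Metric.mem_nhds_iff.mp hU
  refine ⟨δ, hδ, ?_⟩
  intro y hyF hyz hyd
  exact absurd (hUprop y ⟨hball (mem_ball.mpr hyd), hyF⟩) hyz

end

theorem exists_sigma (F : Set ℝ) (hcnt : F.Countable) (hinf : F.Infinite) :
    ∃ σ : ℝ → ℝ, (∀ y ∈ F, σ y ∈ F) ∧ (∀ y ∈ F, σ (σ y) = y) ∧ (∀ y ∈ F, σ y ≠ y) ∧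
      ∀ z : ℝ, ∀ ε : ℝ, 0 < ε → ∃ δ, 0 < δ ∧
        ∀ y ∈ F, y ≠ z → dist y z < δ → dist (σ y) y < ε := by
  haveI := hcnt.to_subtype
  haveI := hinf.to_subtype
  obtain ⟨dnm⟩ := nonempty_denumerable ↥F
  set e : ℕ → ℝ := fun n => ((Denumerable.eqv ↥F).symm n : ℝ) with he
  have hinj : Function.Injective e := by
    intro a b h
    exact (Denumerable.eqv ↥F).symm.injective (Subtype.ext h)
  have hF : range e = F := by
    ext x
    constructor
    · rintro ⟨n, rfl⟩
      exact ((Denumerable.eqv ↥F).symm n).2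
    · intro hx
      exact ⟨(Denumerable.eqv ↥F) ⟨x, hx⟩, by simp [he]⟩
  by_cases hD : (D F).Nonempty
  · refine ⟨sigOf e (prt F e), ?_, ?_, ?_, ?_⟩
    · intro y hy
      rw [← hF] at hy ⊢
      exact sigOf_mem e _ hinj hy
    · intro y hy
      rw [← hF] at hy
      exact sigOf_invol e _ hinj (prt_invol F e hF hD) hy
    · intro y hy
      rw [← hF] at hy
      exact sigOf_ne e _ hinj (prt_ne F e hF hD) hy
    · intro z ε hε
      exact key_of F e hF hD hinj z ε hε
  · have hDe : ∀ z, ¬ AccPt z (𝓟 F) := by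
      intro z hz
      exact hD ⟨z, hz⟩
    set π : ℕ → ℕ := fun i => if i % 2 = 0 then i + 1 else i - 1 with hπ
    have hπinv : ∀ i, π (π i) = i := by
      intro i
      simp only [hπ]
      rcases Nat.mod_two_eq_zero_or_one i with h | h
      · simp only [if_pos h]
        have h2 : ¬((i+1) % 2 = 0) := by omega
        simp only [if_neg h2]
        omega
      · have h1 : ¬(i % 2 = 0) := by omega
        simp only [if_neg h1]
        have h2 : (i-1) % 2 = 0 := by omega
        simp only [if_pos h2]
        omega
    have hπne : ∀ i, π i ≠ i := by
      intro i
      simp only [hπ]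
      split <;> omega
    refine ⟨sigOf e π, ?_, ?_, ?_, ?_⟩
    · intro y hy
      rw [← hF] at hy ⊢
      exact sigOf_mem e π hinj hy
    · intro y hy
      rw [← hF] at hy
      exact sigOf_invol e π hinj hπinv hy
    · intro y hy
      rw [← hF] at hy
      exact sigOf_ne e π hinj hπne hy
    · intro z ε hε
      exact key_trivial F _ (hDe z) ε

end Stmt1Aux

theorem stmt_1 (X F : Set ℝ)
    (hX : X ⊆ Set.range ((↑) : ℚ → ℝ)) (hFX : F ⊆ X)
    (hinf : F.Infinite)
    (hni : ∀ x ∈ F, AccPt x (Filter.principal X)) :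
    ∃ f : X → X, (∀ x, f (f x) = x) ∧
      {x : X | ¬ ContinuousAt f x} = {x : X | (x : ℝ) ∈ F} := by
  classical
  have hcF : F.Countable := (Set.countable_range ((↑) : ℚ → ℝ)).mono (hFX.trans hX)
  obtain ⟨σ, hmem, hinv, hne, hkey⟩ := Stmt1Aux.exists_sigma F hcF hinf
  set f : X → X := fun x => if h : (x:ℝ) ∈ F then ⟨σ x, hFX (hmem _ h)⟩ else x with hf
  have hfval : ∀ (x : X) (h : (x:ℝ) ∈ F), (f x : ℝ) = σ x := by
    intro x h
    simp only [hf, dif_pos h]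
  have hfval' : ∀ (x : X), (x:ℝ) ∉ F → f x = x := by
    intro x h
    simp only [hf, dif_neg h]
  refine ⟨f, ?_, ?_⟩
  · intro x
    by_cases h : (x:ℝ) ∈ F
    · have h1 : (f x : ℝ) = σ x := hfval x h
      have h2 : (f x : ℝ) ∈ F := by rw [h1]; exact hmem _ h
      apply Subtype.ext
      rw [hfval _ h2, h1, hinv _ h]
    · rw [hfval' x h, hfval' x h]
  · ext x
    simp only [Set.mem_setOf_eq]
    constructor
    · intro hnc
      by_contra hxF
      apply hnc
      rw [Metric.continuousAt_iff]
      intro ε hε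
      obtain ⟨δ, hδ, hkey'⟩ := hkey (↑x) (ε/2) (by linarith)
      refine ⟨min δ (ε/2), lt_min hδ (by linarith), ?_⟩
      intro y hy
      rw [Subtype.dist_eq] at hy ⊢
      rw [hfval' x hxF]
      by_cases hyF : (y:ℝ) ∈ F
      · rw [hfval y hyF]
        have hyx : (y:ℝ) ≠ (x:ℝ) := fun hh => hxF (hh ▸ hyF)
        have h3 := hkey' (y:ℝ) hyF hyx (lt_of_lt_of_le hy (min_le_left _ _))
        have h4 : dist (y:ℝ) (x:ℝ) < ε/2 := lt_of_lt_of_le hy (min_le_right _ _)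
        have h5 := dist_triangle (σ (y:ℝ)) (y:ℝ) (x:ℝ)
        linarith
      · rw [hfval' y hyF]
        have h4 : dist (y:ℝ) (x:ℝ) < ε/2 := lt_of_lt_of_le hy (min_le_right _ _)
        linarith
    · intro hxF hcont
      have hane : σ ↑x ≠ ↑x := hne _ hxF
      set ε₀ := dist (σ ↑x) (↑x : ℝ) with hε₀
      have hε₀pos : 0 < ε₀ := dist_pos.mpr hane
      rw [Metric.continuousAt_iff] at hcont
      obtain ⟨δ₀, hδ₀, hc⟩ := hcont (ε₀/4) (by linarith)
      obtain ⟨δ₁, hδ₁, hkey'⟩ := hkey (↑x) (ε₀/4) (by linarith)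
      set δ := min (min δ₀ δ₁) (ε₀/4) with hδdef
      have hδpos : 0 < δ := lt_min (lt_min hδ₀ hδ₁) (by linarith)
      have hacc := hni (↑x) hxF
      obtain ⟨y, ⟨hyb, hyX⟩, hyne⟩ :=
        (accPt_iff_nhds (x := _) (C := _)).mp hacc _ (Metric.ball_mem_nhds _ hδpos)
      set Y : X := ⟨y, hyX⟩ with hY
      have hyd : dist y (↑x : ℝ) < δ := Metric.mem_ball.mp hyb
      have h1 : dist (f Y) (f x) < ε₀/4 := by
        apply hc
        rw [Subtype.dist_eq]
        exact lt_of_lt_of_le hyd ((min_le_left _ _).trans (min_le_left _ _))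
      have hfx : (f x : ℝ) = σ ↑x := hfval x hxF
      have h2 : dist ((f Y : ℝ)) y < ε₀/4 := by
        by_cases hyF : y ∈ F
        · rw [hfval Y hyF]
          exact hkey' y hyF hyne
            (lt_of_lt_of_le hyd ((min_le_left _ _).trans (min_le_right _ _)))
        · rw [hfval' Y hyF]
          simpa [hY] using (by linarith : (0:ℝ) < ε₀/4)
      rw [Subtype.dist_eq, hfx] at h1
      have h3 : dist (σ ↑x) (↑x:ℝ) ≤ dist (σ ↑x) ((f Y:ℝ)) + dist ((f Y:ℝ)) y + dist y ↑x :=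
        dist_triangle4 _ _ _ _
      have h5 : dist (σ ↑x) ((f Y:ℝ)) = dist ((f Y:ℝ)) (σ ↑x) := dist_comm _ _
      have hydb : dist y (↑x:ℝ) < ε₀/4 := lt_of_lt_of_le hyd (min_le_right _ _)
      linarith
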